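/- arXiv:1110.3705 — 3 statements merged into one kernel-verified Lean document; each statement's English description precedes it below -/
import Mathlib

section
/- The operator a_LU defined by a_LU(W) = {v : ∃ v' ∈ W, v ⊑_LU v'} is an abstraction operator: for every set of valuations W, W ⊆ a_LU(W) and a_LU(a_LU(W)) = a_LU(W). -/
open NNReal

/-- The LU-preorder on clock valuations. -/
def simLU {X : Type*} (L U : X → ℕ) (v v' : X → ℝ≥0) : Prop :=
  ∀ x, (v' x < v x → (L x : ℝ≥0) < v' x) ∧ (v x < v' x → (U x : ℝ≥0) < v x)

/-- a_LU(W) = {v : ∃ v' ∈ W, v ⊑_LU v'}. -/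
def aLU {X : Type*} (L U : X → ℕ) (W : Set (X → ℝ≥0)) : Set (X → ℝ≥0) :=
  {v | ∃ v' ∈ W, simLU L U v v'}

lemma simLU_refl {X : Type*} (L U : X → ℕ) (v : X → ℝ≥0) : simLU L U v v := by
  intro x
  exact ⟨fun h => absurd h (lt_irrefl _), fun h => absurd h (lt_irrefl _)⟩

lemma simLU_trans {X : Type*} (L U : X → ℕ) {a b c : X → ℝ≥0}
    (h1 : simLU L U a b) (h2 : simLU L U b c) : simLU L U a c := by
  intro x
  constructor
  · intro hca
    rcases lt_or_ge (c x) (b x) with h | h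
    · exact (h2 x).1 h
    · exact lt_of_lt_of_le ((h1 x).1 (lt_of_le_of_lt h hca)) h
  · intro hac
    rcases lt_or_ge (a x) (b x) with h | h
    · exact (h1 x).2 h
    · exact lt_of_lt_of_le ((h2 x).2 (lt_of_le_of_lt h hac)) h

/-- a_LU is an abstraction operator: W ⊆ a_LU(W) and a_LU(a_LU(W)) = a_LU(W). -/
theorem aLU_abstraction {X : Type*} [Fintype X] (L U : X → ℕ) (W : Set (X → ℝ≥0)) :
    W ⊆ aLU L U W ∧ aLU L U (aLU L U W) = aLU L U W := by
  constructor
  · intro v hv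
    exact ⟨v, hv, simLU_refl L U v⟩
  · ext v
    constructor
    · rintro ⟨v', ⟨v'', hv'', h2⟩, h1⟩
      exact ⟨v'', hv'', simLU_trans L U h1 h2⟩
    · intro hv
      exact ⟨v, hv, simLU_refl L U v⟩
end

section
/- If v ⊑_LU v' then v' satisfies every LU-guard that v satisfies: for every clock x and integer c ≤ L(x), if c < v(x) (resp. c ≤ v(x)) then c < v'(x) (resp. c ≤ v'(x)); and for every c ≤ U(x), if v(x) < c (resp. v(x) ≤ c) then v'(x) < c (resp. v'(x) ≤ c). -/
open NNReal

/-- If v ⊑_LU v' then v' satisfies every LU-guard that v satisfies. -/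
theorem simLU_preserves_guards {X : Type*} [Fintype X] (L U : X → ℕ)
    (v v' : X → ℝ≥0) (h : simLU L U v v') :
    ∀ x, ∀ c : ℕ,
      (c ≤ L x →
        (((c : ℝ≥0) < v x → (c : ℝ≥0) < v' x) ∧ ((c : ℝ≥0) ≤ v x → (c : ℝ≥0) ≤ v' x))) ∧
      (c ≤ U x →
        ((v x < (c : ℝ≥0) → v' x < (c : ℝ≥0)) ∧ (v x ≤ (c : ℝ≥0) → v' x ≤ (c : ℝ≥0)))) := by
  intro x c
  obtain ⟨hL, hU⟩ := h x
  have hcast : ∀ a b : ℕ, a ≤ b → (a : ℝ≥0) ≤ (b : ℝ≥0) := fun a b => by exact_mod_cast id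
  constructor
  · intro hc
    have hc' : (c : ℝ≥0) ≤ (L x : ℝ≥0) := hcast _ _ hc
    constructor
    · intro hv
      rcases lt_or_ge (v' x) (v x) with h1 | h1
      · exact lt_of_le_of_lt hc' (hL h1)
      · exact lt_of_lt_of_le hv h1
    · intro hv
      rcases lt_or_ge (v' x) (v x) with h1 | h1
      · exact le_of_lt (lt_of_le_of_lt hc' (hL h1))
      · exact le_trans hv h1
  · intro hc
    have hc' : (c : ℝ≥0) ≤ (U x : ℝ≥0) := hcast _ _ hc
    constructor
    · intro hv
      rcases lt_or_ge (v x) (v' x) with h1 | h1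
      · exact absurd (lt_of_le_of_lt hc' (hU h1)) (not_lt_of_gt hv)
      · exact lt_of_le_of_lt h1 hv
    · intro hv
      rcases lt_or_ge (v x) (v' x) with h1 | h1
      · exact absurd (lt_of_le_of_lt hc' (hU h1)) (not_lt_of_ge hv)
      · exact le_trans h1 hv
end

section
/- Valuations in the same neighbourhood satisfy the same difference constraints: if v₁ ∈ nbd(v) then for all clocks x, y, integers c and relation ◁ ∈ {<, ≤}: v(y) − v(x) ◁ c iff v₁(y) − v₁(x) ◁ c; and likewise v(x) ◁ c iff v₁(x) ◁ c. Consequently any zone containing v contains v₁. -/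
/-- v₁ is in the neighbourhood of v (iff-form). -/
def nbd {X : Type*} (v v₁ : X → ℝ) : Prop :=
  ∀ x y : X,
    ⌊v x⌋ = ⌊v₁ x⌋ ∧
    (Int.fract (v x) = 0 ↔ Int.fract (v₁ x) = 0) ∧
    (Int.fract (v x) < Int.fract (v y) ↔ Int.fract (v₁ x) < Int.fract (v₁ y)) ∧
    (Int.fract (v x) = Int.fract (v y) ↔ Int.fract (v₁ x) = Int.fract (v₁ y))

/-- An atomic zone constraint: `(i, j, strict, c)` means `ev(j) − ev(i) ◁ c`,
where `ev(none) = 0` and `ev(some x) = v(x)`.  This covers `y − x ◁ c`,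
`x ◁ c` and `x ▷ c`. -/
def csat {X : Type*} (v : X → ℝ) : Option X × Option X × Bool × ℤ → Prop :=
  fun p =>
    let ev : Option X → ℝ := fun o => o.elim 0 v
    if p.2.2.1 then ev p.2.1 - ev p.1 < (p.2.2.2 : ℝ) else ev p.2.1 - ev p.1 ≤ (p.2.2.2 : ℝ)

/-- Valuations in the same neighbourhood satisfy the same difference constraints;
consequently any zone containing v contains v₁. -/
private lemma diff_lt_iff (a b : ℝ) (c : ℤ) :
    b - a < (c : ℝ) ↔ (⌊b⌋ - ⌊a⌋ < c ∨ (⌊b⌋ - ⌊a⌋ = c ∧ Int.fract b < Int.fract a)) := by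
  have ha : (⌊a⌋ : ℝ) + Int.fract a = a := Int.floor_add_fract a
  have hb : (⌊b⌋ : ℝ) + Int.fract b = b := Int.floor_add_fract b
  have ha0 := Int.fract_nonneg a
  have ha1 := Int.fract_lt_one a
  have hb0 := Int.fract_nonneg b
  have hb1 := Int.fract_lt_one b
  constructor
  · intro hlt
    rcases lt_trichotomy (⌊b⌋ - ⌊a⌋) c with h1 | h1 | h1
    · exact Or.inl h1
    · refine Or.inr ⟨h1, ?_⟩
      have : ((⌊b⌋ - ⌊a⌋ : ℤ) : ℝ) = (c : ℝ) := by exact_mod_cast h1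
      push_cast at this
      linarith
    · exfalso
      have : (c : ℝ) + 1 ≤ ((⌊b⌋ - ⌊a⌋ : ℤ) : ℝ) := by exact_mod_cast h1
      push_cast at this
      linarith
  · rintro (h1 | ⟨h1, h2⟩)
    · have : ((⌊b⌋ - ⌊a⌋ : ℤ) : ℝ) + 1 ≤ (c : ℝ) := by exact_mod_cast h1
      push_cast at this
      linarith
    · have : ((⌊b⌋ - ⌊a⌋ : ℤ) : ℝ) = (c : ℝ) := by exact_mod_cast h1
      push_cast at this
      linarith

private lemma diff_le_iff (a b : ℝ) (c : ℤ) :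
    b - a ≤ (c : ℝ) ↔ (⌊b⌋ - ⌊a⌋ < c ∨ (⌊b⌋ - ⌊a⌋ = c ∧ Int.fract b ≤ Int.fract a)) := by
  have ha : (⌊a⌋ : ℝ) + Int.fract a = a := Int.floor_add_fract a
  have hb : (⌊b⌋ : ℝ) + Int.fract b = b := Int.floor_add_fract b
  have ha0 := Int.fract_nonneg a
  have ha1 := Int.fract_lt_one a
  have hb0 := Int.fract_nonneg b
  have hb1 := Int.fract_lt_one b
  constructor
  · intro hle
    rcases lt_trichotomy (⌊b⌋ - ⌊a⌋) c with h1 | h1 | h1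
    · exact Or.inl h1
    · refine Or.inr ⟨h1, ?_⟩
      have : ((⌊b⌋ - ⌊a⌋ : ℤ) : ℝ) = (c : ℝ) := by exact_mod_cast h1
      push_cast at this
      linarith
    · exfalso
      have : (c : ℝ) + 1 ≤ ((⌊b⌋ - ⌊a⌋ : ℤ) : ℝ) := by exact_mod_cast h1
      push_cast at this
      linarith
  · rintro (h1 | ⟨h1, h2⟩)
    · have : ((⌊b⌋ - ⌊a⌋ : ℤ) : ℝ) + 1 ≤ (c : ℝ) := by exact_mod_cast h1
      push_cast at this
      linarith
    · have : ((⌊b⌋ - ⌊a⌋ : ℤ) : ℝ) = (c : ℝ) := by exact_mod_cast h1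
      push_cast at this
      linarith

private lemma pair_iff (a b a' b' : ℝ) (hfa : ⌊a⌋ = ⌊a'⌋) (hfb : ⌊b⌋ = ⌊b'⌋)
    (h2 : Int.fract b < Int.fract a ↔ Int.fract b' < Int.fract a')
    (h3 : Int.fract b ≤ Int.fract a ↔ Int.fract b' ≤ Int.fract a') (c : ℤ) :
    (b - a < (c : ℝ) ↔ b' - a' < (c : ℝ)) ∧ (b - a ≤ (c : ℝ) ↔ b' - a' ≤ (c : ℝ)) := by
  rw [diff_lt_iff, diff_lt_iff, diff_le_iff, diff_le_iff, hfa, hfb, h2, h3]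
  exact ⟨Iff.rfl, Iff.rfl⟩


/-- Valuations -/
theorem nbd_same_constraints {X : Type*} [Fintype X]
    (v v₁ : X → ℝ) (hv : ∀ x, 0 ≤ v x) (hv₁ : ∀ x, 0 ≤ v₁ x)
    (h : nbd v v₁) :
    (∀ x y : X, ∀ c : ℤ,
      ((v y - v x < (c : ℝ)) ↔ (v₁ y - v₁ x < (c : ℝ))) ∧
      ((v y - v x ≤ (c : ℝ)) ↔ (v₁ y - v₁ x ≤ (c : ℝ)))) ∧
    (∀ x : X, ∀ c : ℤ,
      ((v x < (c : ℝ)) ↔ (v₁ x < (c : ℝ))) ∧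
      ((v x ≤ (c : ℝ)) ↔ (v₁ x ≤ (c : ℝ)))) ∧
    (∀ l : List (Option X × Option X × Bool × ℤ),
      (∀ cst ∈ l, csat v cst) → ∀ cst ∈ l, csat v₁ cst) := by
  set ev : (X → ℝ) → Option X → ℝ := fun w o => o.elim 0 w with hev
  have hfl : ∀ o : Option X, ⌊ev v o⌋ = ⌊ev v₁ o⌋ := by
    intro o; cases o with
    | none => rfl
    | some x => exact (h x x).1
  have hlt : ∀ o o' : Option X,
      (Int.fract (ev v o') < Int.fract (ev v o) ↔
       Int.fract (ev v₁ o') < Int.fract (ev v₁ o)) := by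
    intro o o'
    cases o with
    | none =>
      cases o' with
      | none => simp
      | some y =>
        simp only [hev, Option.elim, Int.fract_zero]
        constructor <;> intro hl <;>
          [exact absurd hl (not_lt.2 (Int.fract_nonneg _));
           exact absurd hl (not_lt.2 (Int.fract_nonneg _))]
    | some x =>
      cases o' with
      | none =>
        simp only [hev, Option.elim, Int.fract_zero]
        have h1 := (h x x).2.1
        constructor <;> intro hl
        · rcases lt_or_eq_of_le (Int.fract_nonneg (v₁ x)) with h' | h'
          · exact h'
          · exact absurd (h1.2 h'.symm) (by linarith)
        · rcases lt_or_eq_of_le (Int.fract_nonneg (v x)) with h' | h'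
          · exact h'
          · exact absurd (h1.1 h'.symm) (by linarith)
      | some y =>
        exact (h y x).2.2.1
  have hle : ∀ o o' : Option X,
      (Int.fract (ev v o') ≤ Int.fract (ev v o) ↔
       Int.fract (ev v₁ o') ≤ Int.fract (ev v₁ o)) := by
    intro o o'
    have := hlt o' o
    constructor <;> intro hl
    · exact not_lt.1 (fun hc => not_lt.2 hl (this.2 hc))
    · exact not_lt.1 (fun hc => not_lt.2 hl (this.1 hc))
  have key : ∀ o o' : Option X, ∀ c : ℤ,
      (ev v o' - ev v o < (c : ℝ) ↔ ev v₁ o' - ev v₁ o < (c : ℝ)) ∧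
      (ev v o' - ev v o ≤ (c : ℝ) ↔ ev v₁ o' - ev v₁ o ≤ (c : ℝ)) := by
    intro o o' c
    exact pair_iff _ _ _ _ (hfl o) (hfl o') (hlt o o') (hle o o') c
  refine ⟨?_, ?_, ?_⟩
  · intro x y c
    exact key (some x) (some y) c
  · intro x c
    have := key none (some x) c
    simpa [hev] using this
  · intro l hl cst hcst
    have hc := hl cst hcst
    obtain ⟨i, j, s, c⟩ := cst
    simp only [csat] at hc ⊢
    cases s with
    | true =>
      simp only [if_true] at hc ⊢
      exact ((key i j c).1).1 hc
    | false =>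
      simp only [Bool.false_eq_true, if_false] at hc ⊢
      exact ((key i j c).2).1 hc
end
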